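/- Let F be a subfield of ℂ and let f and g be generalized palindromes with f̄ = u·z^j·f and ḡ = v·z^k·g for some u, v ∈ ℂ^× and j, k ∈ ℤ. Suppose that f, g ∈ F[z,z⁻¹] and that f and g are equicorrelational. Then either f = g = 0, or else there exists w ∈ F^× with v/u = conj(w)/w and moreover j ≡ k (mod 2). -/

import Mathlib

open LaurentPolynomial
open scoped Classical

/-- The length of a Laurent polynomial: 1 plus the difference between the maximal and
minimal exponents occurring with nonzero coefficient; the length of 0 is 0. -/
noncomputable def len {F : Type*} [Field F] (f : LaurentPolynomial F) : ℤ :=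
  if h : f = 0 then 0
  else f.coeff.support.max' (Finsupp.support_nonempty_iff.mpr
       (fun h' => h (AddMonoidAlgebra.coeff_injective h')))
     - f.coeff.support.min' (Finsupp.support_nonempty_iff.mpr
       (fun h' => h (AddMonoidAlgebra.coeff_injective h'))) + 1

/-- Substitution `f(z) ↦ f(z^m)`: the image of `f` under the ring homomorphism
sending `z` to `z^m`. -/
noncomputable def subst {F : Type*} [Field F] (m : ℤ) (f : LaurentPolynomial F) :
    LaurentPolynomial F :=
  AddMonoidAlgebra.mapDomainRingHom F (AddMonoidHom.mulLeft m) f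

/-- The subring `F[z,z⁻¹]` of `E[z,z⁻¹]` consisting of Laurent polynomials all of whose
coefficients lie in the subfield `F` of `E`. -/
noncomputable def LRing {E : Type*} [Field E] (F : Subfield E) :
    Subring (LaurentPolynomial E) where
  carrier := {f : LaurentPolynomial E | ∀ n : ℤ, f.coeff n ∈ F}
  zero_mem' := fun n => F.zero_mem
  one_mem' := by
    intro n
    rw [AddMonoidAlgebra.one_def, AddMonoidAlgebra.coeff_single, Finsupp.single_apply]
    split_ifs
    · exact F.one_mem
    · exact F.zero_mem
  add_mem' := by
    intro f g hf hg n
    rw [AddMonoidAlgebra.coeff_add, Finsupp.add_apply]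
    exact add_mem (hf n) (hg n)
  neg_mem' := by
    intro f hf n
    rw [AddMonoidAlgebra.coeff_neg, Finsupp.neg_apply]
    exact neg_mem (hf n)
  mul_mem' := by
    intro f g hf hg n
    rw [AddMonoidAlgebra.coeff_mul]
    refine sum_mem fun a ha => sum_mem fun b hb => ?_
    dsimp only
    split_ifs
    · exact mul_mem (hf a) (hg b)
    · exact zero_mem F

/-- The conjugate of `f(z) = Σ f_j z^j`, namely `f̄(z) = Σ conj(f_j) z^{-j}`. -/
noncomputable def lconj (f : LaurentPolynomial ℂ) : LaurentPolynomial ℂ :=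
  AddMonoidAlgebra.ofCoeff
    (Finsupp.equivMapDomain (Equiv.neg ℤ) (Finsupp.mapRange (starRingEnd ℂ) (map_zero _) f.coeff))

/-- `f` and `g` are equicorrelational: `f·f̄ = c·g·ḡ` for some positive real `c`. -/
def Equicorrelational (f g : LaurentPolynomial ℂ) : Prop :=
  ∃ c : ℝ, 0 < c ∧ f * lconj f = C (c : ℂ) * (g * lconj g)

/-- `f` and `g` are trivially equicorrelational: `g` is a `ℂ[z,z⁻¹]`-associate of `f`
or of `f̄`. -/
def TrivEquicorrelational (f g : LaurentPolynomial ℂ) : Prop :=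
  Associated g f ∨ Associated g (lconj f)

/-- A generalized palindrome: `f̄` is a `ℂ[z,z⁻¹]`-associate of `f`. -/
def GenPalindrome (f : LaurentPolynomial ℂ) : Prop :=
  Associated (lconj f) f

/-- `g` is an `F[z,z⁻¹]`-associate of `f`: `g = u·f` for some unit `u` of the subring
`F[z,z⁻¹]` of `ℂ[z,z⁻¹]`. -/
def FAssoc (F : Subfield ℂ) (g f : LaurentPolynomial ℂ) : Prop :=
  ∃ u : (LRing F)ˣ, g = ((u : LRing F) : LaurentPolynomial ℂ) * f

/-- The `F[z,z⁻¹]`-associate class of `f`. -/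
def facl (F : Subfield ℂ) (f : LaurentPolynomial ℂ) : Set (LaurentPolynomial ℂ) :=
  {g | FAssoc F g f}

/-- The `F`-trivial equicorrelationality class of `f`: all elements of `F[z,z⁻¹]`
that are trivially equicorrelational to `f`. -/
def fte (F : Subfield ℂ) (f : LaurentPolynomial ℂ) : Set (LaurentPolynomial ℂ) :=
  {g | g ∈ LRing F ∧ TrivEquicorrelational f g}

/-- A `k`-ary sequence: a Laurent polynomial whose support is a segment of consecutive
integers and whose nonzero coefficients are complex `k`-th roots of unity. -/
def IsKary (k : ℕ) (f : LaurentPolynomial ℂ) : Prop :=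
  (∀ i j l : ℤ, i ≤ j → j ≤ l → f.coeff i ≠ 0 → f.coeff l ≠ 0 → f.coeff j ≠ 0) ∧
  ∀ n : ℤ, f.coeff n ≠ 0 → (f.coeff n) ^ k = 1

/-- A binary sequence: a Laurent polynomial whose support is a segment of consecutive
integers and whose nonzero coefficients all lie in `{1, -1}`. -/
def IsBinary (f : LaurentPolynomial ℂ) : Prop :=
  (∀ i j l : ℤ, i ≤ j → j ≤ l → f.coeff i ≠ 0 → f.coeff l ≠ 0 → f.coeff j ≠ 0) ∧
  ∀ n : ℤ, f.coeff n ≠ 0 → f.coeff n = 1 ∨ f.coeff n = -1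

instance : CoeFun (LaurentPolynomial ℂ) (fun _ => ℤ → ℂ) := ⟨fun f => f.coeff⟩

lemma lconj_apply (f : LaurentPolynomial ℂ) (n : ℤ) :
    lconj f n = (starRingEnd ℂ) (f (-n)) := by
  simp [lconj, Finsupp.equivMapDomain_apply]

lemma CT_mul_apply (u : ℂ) (j : ℤ) (f : LaurentPolynomial ℂ) (n : ℤ) :
    (C u * T j * f : LaurentPolynomial ℂ) n = u * f (n - j) := by
  rw [← single_eq_C_mul_T u j]
  have := AddMonoidAlgebra.coeff_single_mul_apply f u j n
  rw [show -j + n = n - j by ring] at this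
  exact this

lemma C_ne_zero' (c : ℂ) (h : c ≠ 0) : (C c : LaurentPolynomial ℂ) ≠ 0 := by
  intro hh
  have h0 : (C c : LaurentPolynomial ℂ) 0 = 0 := by rw [hh]; rfl
  rw [show (C c : LaurentPolynomial ℂ) = AddMonoidAlgebra.single 0 c by
    rw [single_eq_C_mul_T c 0, T_zero, mul_one]] at h0
  simp at h0
  exact h h0

lemma lp_ext {f g : LaurentPolynomial ℂ} (h : ∀ n, f n = g n) : f = g := AddMonoidAlgebra.coeff_injective (Finsupp.ext h)

lemma lconj_eq_zero {f : LaurentPolynomial ℂ} (h : lconj f = 0) : f = 0 := by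
  refine lp_ext fun n => ?_
  have h2 : lconj f (-n) = 0 := by rw [h]; rfl
  rw [lconj_apply] at h2
  simpa using h2

lemma mul_apply_gt (p q : LaurentPolynomial ℂ) (dp dq : ℤ)
    (hp : ∀ n, dp < n → p n = 0) (hq : ∀ n, dq < n → q n = 0)
    (n : ℤ) (hn : dp + dq < n) : (p * q : LaurentPolynomial ℂ) n = 0 := by
  rw [AddMonoidAlgebra.mul_apply]
  refine Finset.sum_eq_zero fun a ha => Finset.sum_eq_zero fun b hb => ?_
  have ha' : a ≤ dp := by
    by_contra h; exact (Finsupp.mem_support_iff.mp ha) (hp a (by omega))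
  have hb' : b ≤ dq := by
    by_contra h; exact (Finsupp.mem_support_iff.mp hb) (hq b (by omega))
  dsimp only
  rw [if_neg (by omega)]

lemma mul_apply_top (p q : LaurentPolynomial ℂ) (dp dq : ℤ)
    (hp : ∀ n, dp < n → p n = 0) (hq : ∀ n, dq < n → q n = 0)
    (hpd : p dp ≠ 0) (hqd : q dq ≠ 0) :
    (p * q : LaurentPolynomial ℂ) (dp + dq) = p dp * q dq := by
  have inner : ∀ a ∈ p.coeff.support,
      (Finsupp.sum q.coeff fun b qb => if a + b = dp + dq then p a * qb else 0)
        = (if a = dp then p dp * q dq else 0) := by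
    intro a ha
    have ha' : a ≤ dp := by
      by_contra h; exact (Finsupp.mem_support_iff.mp ha) (hp a (by omega))
    rcases eq_or_lt_of_le ha' with rfl | hlt
    · rw [if_pos rfl, Finsupp.sum,
        Finset.sum_eq_single_of_mem dq (Finsupp.mem_support_iff.mpr hqd)
          (fun b hb hbne => if_neg (by omega))]
      exact if_pos rfl
    · rw [if_neg (by omega), Finsupp.sum]
      refine Finset.sum_eq_zero fun b hb => ?_
      have hb' : b ≤ dq := by
        by_contra h; exact (Finsupp.mem_support_iff.mp hb) (hq b (by omega))
      exact if_neg (by omega)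
  rw [AddMonoidAlgebra.mul_apply, Finsupp.sum, Finset.sum_congr rfl inner,
    Finset.sum_ite_eq' p.coeff.support dp (fun _ => p dp * q dq),
    if_pos (Finsupp.mem_support_iff.mpr hpd)]

lemma lconj_zero : lconj 0 = 0 := by
  refine lp_ext fun n => ?_
  rw [lconj_apply]
  simp

theorem stmt14 (f g : LaurentPolynomial ℂ) (u v : ℂ) (hu : u ≠ 0) (hv : v ≠ 0)
    (j k : ℤ) (hfp : lconj f = C u * T j * f) (hgp : lconj g = C v * T k * g)
    (F : Subfield ℂ) (hfF : f ∈ LRing F) (hgF : g ∈ LRing F)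
    (heq : Equicorrelational f g) :
    (f = 0 ∧ g = 0) ∨
      ((∃ w : ℂ, w ∈ F ∧ w ≠ 0 ∧ v / u = (starRingEnd ℂ) w / w) ∧
        j ≡ k [ZMOD 2]) := by
  have hfF' : ∀ n : ℤ, f n ∈ F := hfF
  have hgF' : ∀ n : ℤ, g n ∈ F := hgF
  have hcc' : ∃ c : ℝ, 0 < c ∧ f * lconj f = C (c : ℂ) * (g * lconj g) := heq

  obtain ⟨c, hc, hcc⟩ := hcc'
  have hCc : (C (c:ℂ) : LaurentPolynomial ℂ) ≠ 0 :=
    C_ne_zero' _ (by exact_mod_cast hc.ne')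
  by_cases hf0 : f = 0
  · left
    refine ⟨hf0, ?_⟩
    rw [hf0, lconj_zero, zero_mul] at hcc
    rcases mul_eq_zero.mp hcc.symm with h | h
    · exact absurd h hCc
    · rcases mul_eq_zero.mp h with h' | h'
      · exact h'
      · exact lconj_eq_zero h'
  right
  have hg0 : g ≠ 0 := by
    intro h
    rw [h, lconj_zero, mul_zero, mul_zero] at hcc
    rcases mul_eq_zero.mp hcc with h' | h'
    · exact hf0 h'
    · exact hf0 (lconj_eq_zero h')
  -- support maxima
  have hfne := Finsupp.support_nonempty_iff.mpr (fun h' => hf0 (AddMonoidAlgebra.coeff_injective h'))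
  have hgne := Finsupp.support_nonempty_iff.mpr (fun h' => hg0 (AddMonoidAlgebra.coeff_injective h'))
  set d := f.coeff.support.max' hfne with hd
  set e := g.coeff.support.max' hgne with he
  have hfd : f d ≠ 0 := Finsupp.mem_support_iff.mp (f.coeff.support.max'_mem hfne)
  have hge : g e ≠ 0 := Finsupp.mem_support_iff.mp (g.coeff.support.max'_mem hgne)
  have hfd' : ∀ n, d < n → f n = 0 := fun n hn => by
    by_contra h
    exact absurd (Finset.le_max' _ n (Finsupp.mem_support_iff.mpr h)) (by omega)
  have hge' : ∀ n, e < n → g n = 0 := fun n hn => by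
    by_contra h
    exact absurd (Finset.le_max' _ n (Finsupp.mem_support_iff.mpr h)) (by omega)
  -- palindrome coefficient relation
  have hfc : ∀ n : ℤ, (starRingEnd ℂ) (f n) = u * f (-n - j) := fun n => by
    have h1 : lconj f (-n) = (C u * T j * f : LaurentPolynomial ℂ) (-n) := by rw [hfp]
    rw [lconj_apply, CT_mul_apply, neg_neg] at h1
    exact h1
  have hgc : ∀ n : ℤ, (starRingEnd ℂ) (g n) = v * g (-n - k) := fun n => by
    have h1 : lconj g (-n) = (C v * T k * g : LaurentPolynomial ℂ) (-n) := by rw [hgp]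
    rw [lconj_apply, CT_mul_apply, neg_neg] at h1
    exact h1
  -- |u| = |v| = 1
  have huu : (starRingEnd ℂ) u * u = 1 := by
    have h1 := hfc d
    have h2 := hfc (-d - j)
    rw [show -(-d - j) - j = d by ring] at h2
    have h3 := congrArg (starRingEnd ℂ) h1
    rw [map_mul, Complex.conj_conj, h2] at h3
    have h4 : (1 - (starRingEnd ℂ) u * u) * f d = 0 := by linear_combination h3
    rcases mul_eq_zero.mp h4 with h | h
    · linear_combination -h
    · exact absurd h hfd
  have hvv : (starRingEnd ℂ) v * v = 1 := by
    have h1 := hgc e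
    have h2 := hgc (-e - k)
    rw [show -(-e - k) - k = e by ring] at h2
    have h3 := congrArg (starRingEnd ℂ) h1
    rw [map_mul, Complex.conj_conj, h2] at h3
    have h4 : (1 - (starRingEnd ℂ) v * v) * g e = 0 := by linear_combination h3
    rcases mul_eq_zero.mp h4 with h | h
    · linear_combination -h
    · exact absurd h hge
  -- the squared equation
  have heq2 : (C u * T j * (f * f) : LaurentPolynomial ℂ)
      = C ((c:ℂ) * v) * T k * (g * g) := by
    have h1 : f * lconj f = C u * T j * (f * f) := by rw [hfp]; ring
    have h2 : (C (c:ℂ) : LaurentPolynomial ℂ) * (g * lconj g)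
        = C ((c:ℂ) * v) * T k * (g * g) := by rw [hgp, map_mul]; ring
    rw [← h1, hcc, h2]
  have hsq : ∀ n : ℤ, u * (f * f : LaurentPolynomial ℂ) (n - j)
      = ((c:ℂ) * v) * (g * g : LaurentPolynomial ℂ) (n - k) := fun n => by
    have h1 : (C u * T j * (f * f) : LaurentPolynomial ℂ) n
        = (C ((c:ℂ) * v) * T k * (g * g) : LaurentPolynomial ℂ) n := by rw [heq2]
    rwa [CT_mul_apply, CT_mul_apply] at h1
  have hff : (f * f : LaurentPolynomial ℂ) (d + d) = f d * f d :=
    mul_apply_top f f d d hfd' hfd' hfd hfd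
  have hgg : (g * g : LaurentPolynomial ℂ) (e + e) = g e * g e :=
    mul_apply_top g g e e hge' hge' hge hge
  have hff' : ∀ n, d + d < n → (f * f : LaurentPolynomial ℂ) n = 0 :=
    mul_apply_gt f f d d hfd' hfd'
  have hgg' : ∀ n, e + e < n → (g * g : LaurentPolynomial ℂ) n = 0 :=
    mul_apply_gt g g e e hge' hge'
  have hcv : (c:ℂ) * v ≠ 0 := mul_ne_zero (by exact_mod_cast hc.ne') hv
  -- degree equality
  have hde : j + (d + d) = k + (e + e) := by
    rcases lt_trichotomy (j + (d + d)) (k + (e + e)) with h | h | h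
    · exfalso
      have h8 := hsq (k + (e + e))
      rw [show k + (e + e) - k = e + e by ring, hgg,
        hff' (k + (e + e) - j) (by omega), mul_zero] at h8
      exact (mul_ne_zero hcv (mul_ne_zero hge hge)) h8.symm
    · exact h
    · exfalso
      have h8 := hsq (j + (d + d))
      rw [show j + (d + d) - j = d + d by ring, hff,
        hgg' (j + (d + d) - k) (by omega), mul_zero] at h8
      exact (mul_ne_zero hu (mul_ne_zero hfd hfd)) h8
  constructor
  · -- the main coefficient equation
    have habs : u * (f d * f d) = ((c:ℂ) * v) * (g e * g e) := by
      have h7 := hsq (j + (d + d))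
      rwa [show j + (d + d) - j = d + d by ring, hff,
        show j + (d + d) - k = e + e by omega, hgg] at h7
    set a := f d with ha
    set b := g e with hb
    -- conj a * a = c * (conj b * b)
    have hcnj := congrArg (starRingEnd ℂ) habs
    simp only [map_mul, Complex.conj_ofReal] at hcnj
    have hsq2 : ((starRingEnd ℂ) a * a) ^ 2 = ((c:ℂ) * ((starRingEnd ℂ) b * b)) ^ 2 := by
      linear_combination ((starRingEnd ℂ) u * ((starRingEnd ℂ) a * (starRingEnd ℂ) a)) * habs
        + ((c:ℂ) * v * (b * b)) * hcnj
        - ((starRingEnd ℂ) a * a * ((starRingEnd ℂ) a * a)) * huu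
        + ((c:ℂ)^2 * (starRingEnd ℂ) b * b * ((starRingEnd ℂ) b * b)) * hvv
    have hxr : Complex.normSq a = c * Complex.normSq b := by
      have h11 : (Complex.normSq a) ^ 2 = (c * Complex.normSq b) ^ 2 := by
        have h9 : ((Complex.normSq a : ℝ) : ℂ) ^ 2 = (((c * Complex.normSq b : ℝ)) : ℂ) ^ 2 := by
          push_cast
          rw [Complex.normSq_eq_conj_mul_self, Complex.normSq_eq_conj_mul_self]
          exact hsq2
        exact_mod_cast h9
      have hna : 0 < Complex.normSq a := Complex.normSq_pos.mpr hfd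
      have hnb : 0 < Complex.normSq b := Complex.normSq_pos.mpr hge
      rcases sq_eq_sq_iff_eq_or_eq_neg.mp h11 with h | h
      · exact h
      · nlinarith
    have hx : (starRingEnd ℂ) a * a = (c:ℂ) * ((starRingEnd ℂ) b * b) := by
      have h12 := congrArg (Complex.ofReal) hxr
      push_cast at h12
      rwa [Complex.normSq_eq_conj_mul_self, Complex.normSq_eq_conj_mul_self] at h12
    have h5 : a * (u * a * (starRingEnd ℂ) b - v * b * (starRingEnd ℂ) a) = 0 := by
      linear_combination (starRingEnd ℂ) b * habs - v * b * hx
    have h6 := (mul_eq_zero.mp h5).resolve_left hfd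
    have hca : (starRingEnd ℂ) a ≠ 0 := fun h => hfd (by
      have := congrArg (starRingEnd ℂ) h
      simpa using this)
    refine ⟨b / a, F.div_mem (hgF' e) (hfF' d), div_ne_zero hge hfd, ?_⟩
    rw [map_div₀]
    field_simp
    linear_combination -h6
  · rw [Int.modEq_iff_dvd]
    exact ⟨d - e, by omega⟩
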